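/- Let d, K, H be positive integers and λ, α > 0 reals. For k ∈ {1,…,K} and h ∈ {1,…,H}, let x_{k,h} ∈ ℝ^d with ‖x_{k,h}‖₂ ≤ 1 and let σ_{k,h} ≥ α be reals. Define d×d matrices recursively by Z₁ = λ·I_d and Z_{k+1} = Z_k + Σ_{h=1}^H x_{k,h} x_{k,h}ᵀ / σ_{k,h}². Then the number of indices k ∈ {1,…,K} such that det(Z_{k+1}) > 16 · det(Z_k) is at most (d/2)·log(1 + K H / (d λ α²)). -/

import Mathlib

open Matrix Finset

section Aux
variable {d : ℕ}

lemma psd_outer (v : Fin d → ℝ) : (vecMulVec v v).PosSemidef := by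
  rw [posSemidef_iff_dotProduct_mulVec]
  constructor
  · ext i j
    simp [vecMulVec_apply, IsHermitian, conjTranspose, mul_comm]
  · intro y
    have : vecMulVec v v *ᵥ y = (v ⬝ᵥ y) • v := by
      ext i
      simp only [vecMulVec_apply, mulVec, dotProduct, Pi.smul_apply, smul_eq_mul,
        Finset.sum_mul]
      exact Finset.sum_congr rfl fun j _ => by ring
    rw [this]
    simp only [star_trivial, dotProduct_smul, smul_eq_mul]
    have : y ⬝ᵥ v = v ⬝ᵥ y := dotProduct_comm _ _
    rw [this]
    exact mul_self_nonneg _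

lemma psd_smul {A : Matrix (Fin d) (Fin d) ℝ} (hA : A.PosSemidef) {c : ℝ} (hc : 0 ≤ c) :
    (c • A).PosSemidef := by
  rw [posSemidef_iff_dotProduct_mulVec]
  constructor
  · unfold Matrix.IsHermitian
    rw [conjTranspose_smul, hA.1]
    simp
  · intro y
    rw [smul_mulVec, dotProduct_smul, smul_eq_mul]
    exact mul_nonneg hc (hA.dotProduct_mulVec_nonneg y)

lemma psd_sum {ι : Type*} (s : Finset ι) (f : ι → Matrix (Fin d) (Fin d) ℝ)
    (h : ∀ i ∈ s, (f i).PosSemidef) : (∑ i ∈ s, f i).PosSemidef := by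
  classical
  induction s using Finset.induction with
  | empty => simpa using Matrix.PosSemidef.zero
  | insert _ _ hi ih =>
    rw [Finset.sum_insert hi]
    exact (h _ (Finset.mem_insert_self _ _)).add (ih fun i hm => h i (Finset.mem_insert_of_mem hm))

lemma trace_outer (v : Fin d → ℝ) : (vecMulVec v v).trace = v ⬝ᵥ v := by
  simp [Matrix.trace, Matrix.diag, vecMulVec_apply, dotProduct]

lemma psd_det_nonneg {M : Matrix (Fin d) (Fin d) ℝ} (hM : M.PosSemidef) : 0 ≤ M.det := by
  rw [hM.1.det_eq_prod_eigenvalues]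
  exact Finset.prod_nonneg fun i _ => by simpa using hM.eigenvalues_nonneg i

lemma psd_trace_eq_sum {A : Matrix (Fin d) (Fin d) ℝ} (hA : A.IsHermitian) :
    A.trace = ∑ i, hA.eigenvalues i := by
  rw [hA.trace_eq_sum_eigenvalues]
  simp

lemma det_one_add_ge {C : Matrix (Fin d) (Fin d) ℝ} (hC : C.PosSemidef) :
    1 ≤ (1 + C).det := by
  have hH := hC.1
  have hU : (hH.eigenvectorUnitary : Matrix (Fin d) (Fin d) ℝ) *
      (star hH.eigenvectorUnitary : Matrix (Fin d) (Fin d) ℝ) = 1 := by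
    simpa using (Matrix.mem_unitaryGroup_iff).mp hH.eigenvectorUnitary.2
  have key : 1 + C = (hH.eigenvectorUnitary : Matrix (Fin d) (Fin d) ℝ) *
      (1 + diagonal (RCLike.ofReal ∘ hH.eigenvalues)) *
      (star hH.eigenvectorUnitary : Matrix (Fin d) (Fin d) ℝ) := by
    rw [Matrix.mul_add, Matrix.add_mul, Matrix.mul_one, hU]
    congr 1
    exact hH.spectral_theorem
  rw [key, Matrix.det_mul, Matrix.det_mul]
  have hUdet : (hH.eigenvectorUnitary : Matrix (Fin d) (Fin d) ℝ).det *
      (star hH.eigenvectorUnitary : Matrix (Fin d) (Fin d) ℝ).det = 1 := by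
    rw [← Matrix.det_mul, hU, Matrix.det_one]
  have hdiageq : (1 + diagonal (RCLike.ofReal ∘ hH.eigenvalues) : Matrix (Fin d) (Fin d) ℝ) =
      diagonal (fun i => 1 + hH.eigenvalues i) := by
    rw [← Matrix.diagonal_one, Matrix.diagonal_add]
    rfl
  have hdiag : 1 ≤ (1 + diagonal (RCLike.ofReal ∘ hH.eigenvalues) : Matrix (Fin d) (Fin d) ℝ).det := by
    rw [hdiageq, Matrix.det_diagonal]
    have h1 : (1:ℝ) = ∏ _i : Fin d, (1:ℝ) := by simp
    rw [h1]
    refine Finset.prod_le_prod (fun i _ => by norm_num) (fun i _ => ?_)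
    linarith [hC.eigenvalues_nonneg i]
  have hre : (hH.eigenvectorUnitary : Matrix (Fin d) (Fin d) ℝ).det *
      ((1 + diagonal (RCLike.ofReal ∘ hH.eigenvalues) : Matrix (Fin d) (Fin d) ℝ)).det *
      (star hH.eigenvectorUnitary : Matrix (Fin d) (Fin d) ℝ).det =
      ((1 + diagonal (RCLike.ofReal ∘ hH.eigenvalues) : Matrix (Fin d) (Fin d) ℝ)).det *
      ((hH.eigenvectorUnitary : Matrix (Fin d) (Fin d) ℝ).det *
       (star hH.eigenvectorUnitary : Matrix (Fin d) (Fin d) ℝ).det) := by ring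
  rw [hre, hUdet, mul_one]
  exact hdiag

open scoped MatrixOrder in
lemma det_mono_add {A B : Matrix (Fin d) (Fin d) ℝ} (hA : A.PosDef) (hB : B.PosSemidef) :
    A.det ≤ (A + B).det := by
  have hAs := hA.posSemidef
  set S := CFC.sqrt A with hS
  have hSpsd : S.PosSemidef := (CFC.sqrt_nonneg A).posSemidef
  have hSS : S * S = A := CFC.sqrt_mul_sqrt_self A hAs.nonneg
  have hdetS : 0 < S.det := by
    have h2 : S.det * S.det = A.det := by rw [← Matrix.det_mul, hSS]
    have hApos := hA.det_pos
    rcases lt_trichotomy S.det 0 with h | h | h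
    · nlinarith [psd_det_nonneg hSpsd]
    · exfalso; rw [h] at h2; simpa [← h2] using hApos
    · exact h
  have hSinv : S * S⁻¹ = 1 := Matrix.mul_nonsing_inv S (isUnit_iff_ne_zero.mpr hdetS.ne')
  have hSinv' : S⁻¹ * S = 1 := Matrix.nonsing_inv_mul S (isUnit_iff_ne_zero.mpr hdetS.ne')
  set C := S⁻¹ * B * S⁻¹ with hCdef
  have hSinvH : S⁻¹.IsHermitian := by
    have := hSpsd.1
    unfold Matrix.IsHermitian at *
    rw [Matrix.conjTranspose_nonsing_inv, this]
  have hCpsd : C.PosSemidef := by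
    have : C = (S⁻¹)ᴴ * B * S⁻¹ := by rw [hSinvH]
    rw [this]
    exact hB.conjTranspose_mul_mul_same _
  have key : A + B = S * (1 + C) * S := by
    rw [Matrix.mul_add, Matrix.add_mul, Matrix.mul_one, hSS, hCdef]
    congr 1
    rw [← Matrix.mul_assoc, ← Matrix.mul_assoc, hSinv, Matrix.one_mul, Matrix.mul_assoc,
      hSinv', Matrix.mul_one]
  rw [key, Matrix.det_mul, Matrix.det_mul]
  calc A.det = S.det * 1 * S.det := by rw [mul_one, ← Matrix.det_mul, hSS]
  _ ≤ S.det * (1 + C).det * S.det := by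
      have h1 := det_one_add_ge hCpsd
      nlinarith [mul_pos hdetS hdetS, h1]

lemma psd_det_le_trace_pow (hd : 0 < d) {A : Matrix (Fin d) (Fin d) ℝ}
    (hA : A.PosSemidef) : A.det ≤ (A.trace / d) ^ d := by
  have hμ : ∀ i, 0 ≤ hA.1.eigenvalues i := hA.eigenvalues_nonneg
  have hdet : A.det = ∏ i, hA.1.eigenvalues i := by
    rw [hA.1.det_eq_prod_eigenvalues]; norm_num
  have htr : A.trace = ∑ i, hA.1.eigenvalues i := psd_trace_eq_sum hA.1
  have hd' : (0:ℝ) < d := by exact_mod_cast hd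
  have hw' : ∑ _i : Fin d, ((d:ℝ))⁻¹ = 1 := by
    rw [Finset.sum_const]; simp [Finset.card_univ, mul_inv_cancel₀ hd'.ne']
  have hgm := Real.geom_mean_le_arith_mean_weighted Finset.univ
    (fun _ => ((d:ℝ))⁻¹) hA.1.eigenvalues (fun i _ => by positivity) hw' (fun i _ => hμ i)
  have hrhs : ∑ i, ((d:ℝ))⁻¹ * hA.1.eigenvalues i = A.trace / d := by
    rw [htr, ← Finset.mul_sum]; ring
  rw [hrhs] at hgm
  have hlhs : (∏ i, hA.1.eigenvalues i ^ ((d:ℝ))⁻¹) ^ d = ∏ i, hA.1.eigenvalues i := by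
    rw [← Finset.prod_pow]
    refine Finset.prod_congr rfl fun i _ => ?_
    rw [← Real.rpow_natCast (hA.1.eigenvalues i ^ ((d:ℝ))⁻¹) d, ← Real.rpow_mul (hμ i),
      inv_mul_cancel₀ hd'.ne', Real.rpow_one]
  have h0 : 0 ≤ ∏ i, hA.1.eigenvalues i ^ ((d:ℝ))⁻¹ :=
    Finset.prod_nonneg fun i _ => Real.rpow_nonneg (hμ i) _
  calc A.det = (∏ i, hA.1.eigenvalues i ^ ((d:ℝ))⁻¹) ^ d := by rw [hlhs, hdet]
  _ ≤ (A.trace / d) ^ d := pow_le_pow_left₀ h0 hgm d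

lemma posdef_smul_one {c : ℝ} (hc : 0 < c) : (c • (1 : Matrix (Fin d) (Fin d) ℝ)).PosDef := by
  rw [posDef_iff_dotProduct_mulVec]
  constructor
  · unfold Matrix.IsHermitian
    rw [conjTranspose_smul, conjTranspose_one]
    simp
  · intro y hy
    rw [smul_mulVec, Matrix.one_mulVec, dotProduct_smul, smul_eq_mul]
    refine mul_pos hc ?_
    have : (0:ℝ) < y ⬝ᵥ y := by
      rcases (dotProduct_self_eq_zero (v := y)).not.mpr hy with h
      have h0 : 0 ≤ y ⬝ᵥ y := Finset.sum_nonneg fun i _ => mul_self_nonneg _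
      cases' h0.lt_or_eq with h1 h1
      · exact h1
      · exact absurd h1.symm h
    simpa using this
end Aux
/-- The number of episodes in which the determinant of the covariance matrix
grows by more than a factor of 16 is at most `(d/2)·log(1 + KH/(dλα²))`. -/
theorem stmt_6 (d K H : ℕ) (hd : 0 < d) (hK : 0 < K) (hH : 0 < H)
    (lam α : ℝ) (hlam : 0 < lam) (hα : 0 < α)
    (x : ℕ → ℕ → Fin d → ℝ)
    (hx : ∀ k ∈ Finset.Icc 1 K, ∀ h ∈ Finset.Icc 1 H, Real.sqrt (x k h ⬝ᵥ x k h) ≤ 1)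
    (σ : ℕ → ℕ → ℝ)
    (hσ : ∀ k ∈ Finset.Icc 1 K, ∀ h ∈ Finset.Icc 1 H, α ≤ σ k h)
    (Z : ℕ → Matrix (Fin d) (Fin d) ℝ)
    (hZ1 : Z 1 = lam • (1 : Matrix (Fin d) (Fin d) ℝ))
    (hZ : ∀ k, 1 ≤ k → Z (k + 1) =
      Z k + ∑ h ∈ Finset.Icc 1 H, ((σ k h) ^ 2)⁻¹ • vecMulVec (x k h) (x k h)) :
    (((Finset.Icc 1 K).filter fun k => 16 * (Z k).det < (Z (k + 1)).det).card : ℝ) ≤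
      (d : ℝ) / 2 * Real.log (1 + K * H / (d * lam * α ^ 2)) := by
  classical
  have hd' : (0:ℝ) < d := by exact_mod_cast hd
  -- increments are psd
  have hincr : ∀ k, (∑ h ∈ Finset.Icc 1 H,
      ((σ k h) ^ 2)⁻¹ • vecMulVec (x k h) (x k h)).PosSemidef := fun k =>
    psd_sum _ _ fun h _ => psd_smul (psd_outer _) (by positivity)
  -- all Z k posdef for k ≥ 1
  have hPD : ∀ k, 1 ≤ k → (Z k).PosDef := by
    intro k hk
    induction k with
    | zero => omega
    | succ n ih =>
      rcases Nat.lt_or_ge 0 n with h | h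
      · have hn : 1 ≤ n := h
        rw [hZ n hn]
        exact (ih hn).add_posSemidef (hincr n)
      · have : n = 0 := by omega
        subst this
        rw [hZ1]
        exact posdef_smul_one hlam
  -- determinant monotone
  have hmono : ∀ k, 1 ≤ k → (Z k).det ≤ (Z (k+1)).det := by
    intro k hk
    rw [hZ k hk]
    exact det_mono_add (hPD k hk) (hincr k)
  have hdetZ1 : (Z 1).det = lam ^ d := by
    rw [hZ1, Matrix.det_smul, Matrix.det_one, mul_one]
    simp
  -- Step C: growth lower bound
  have hlow : ∀ k : ℕ, (16:ℝ) ^ ((Finset.Icc 1 k).filter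
      (fun k => 16 * (Z k).det < (Z (k + 1)).det)).card * lam ^ d ≤ (Z (k+1)).det := by
    intro k
    induction k with
    | zero => simp [hdetZ1]
    | succ n ih =>
      have hins : Finset.Icc 1 (n+1) = insert (n+1) (Finset.Icc 1 n) :=
        (Finset.insert_Icc_right_eq_Icc_add_one (by omega)).symm
      rw [hins, Finset.filter_insert]
      by_cases hc : 16 * (Z (n+1)).det < (Z (n+2)).det
      · rw [if_pos hc, Finset.card_insert_of_notMem (by
          intro hmem
          have := Finset.mem_of_mem_filter _ hmem
          simp at this)]
        rw [pow_succ]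
        calc 16 ^ ((Finset.Icc 1 n).filter
              (fun k => 16 * (Z k).det < (Z (k + 1)).det)).card * 16 * lam ^ d
            = 16 * (16 ^ ((Finset.Icc 1 n).filter
              (fun k => 16 * (Z k).det < (Z (k + 1)).det)).card * lam ^ d) := by ring
        _ ≤ 16 * (Z (n+1)).det := by linarith [ih]
        _ ≤ (Z (n+2)).det := hc.le
      · rw [if_neg hc]
        exact ih.trans (hmono (n+1) (by omega))
  -- Step D: trace upper bound
  have htrace : ∀ k : ℕ, k ≤ K → (Z (k+1)).trace ≤ d * lam + k * H / α ^ 2 := by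
    intro k hkK
    induction k with
    | zero =>
      rw [hZ1, Matrix.trace_smul, Matrix.trace_one]
      simp [mul_comm]
    | succ n ih =>
      have hnK : n ≤ K := by omega
      have hmem : n + 1 ∈ Finset.Icc 1 K := by
        rw [Finset.mem_Icc]; omega
      rw [hZ (n+1) (by omega), Matrix.trace_add, Matrix.trace_sum]
      have hterm : ∀ h ∈ Finset.Icc 1 H,
          (((σ (n+1) h) ^ 2)⁻¹ • vecMulVec (x (n+1) h) (x (n+1) h)).trace ≤ (α ^ 2)⁻¹ := by
        intro h hhm
        rw [Matrix.trace_smul, trace_outer, smul_eq_mul]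
        have hxn : 0 ≤ x (n+1) h ⬝ᵥ x (n+1) h :=
          Finset.sum_nonneg fun i _ => mul_self_nonneg _
        have hx1 : x (n+1) h ⬝ᵥ x (n+1) h ≤ 1 := by
          have hs := hx (n+1) hmem h hhm
          nlinarith [Real.sq_sqrt hxn, Real.sqrt_nonneg (x (n+1) h ⬝ᵥ x (n+1) h)]
        have hσ2 : α ^ 2 ≤ (σ (n+1) h) ^ 2 :=
          pow_le_pow_left₀ hα.le (hσ (n+1) hmem h hhm) 2
        have hinv : ((σ (n+1) h) ^ 2)⁻¹ ≤ (α ^ 2)⁻¹ := by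
          apply inv_anti₀ (by positivity) hσ2
        calc ((σ (n+1) h) ^ 2)⁻¹ * (x (n+1) h ⬝ᵥ x (n+1) h) ≤ ((σ (n+1) h) ^ 2)⁻¹ * 1 := by
              exact mul_le_mul_of_nonneg_left hx1 (by positivity)
        _ = ((σ (n+1) h) ^ 2)⁻¹ := mul_one _
        _ ≤ (α ^ 2)⁻¹ := hinv
      have hsum : ∑ h ∈ Finset.Icc 1 H,
          (((σ (n+1) h) ^ 2)⁻¹ • vecMulVec (x (n+1) h) (x (n+1) h)).trace ≤ H * (α ^ 2)⁻¹ := by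
        calc _ ≤ ∑ _h ∈ Finset.Icc 1 H, (α ^ 2)⁻¹ := Finset.sum_le_sum hterm
        _ = H * (α^2)⁻¹ := by
            rw [Finset.sum_const, Nat.card_Icc]; simp
      have := ih hnK
      push_cast
      push_cast at this
      have hre : ((n:ℝ)+1)*(H:ℝ)/α^2 = (n:ℝ)*(H:ℝ)/α^2 + (H:ℝ)*(α^2)⁻¹ := by
        field_simp
      rw [hre]
      linarith
  -- Step E: det upper bound
  have hPDK := hPD (K+1) (by omega)
  have htr0 : 0 ≤ (Z (K+1)).trace := by
    rw [psd_trace_eq_sum hPDK.posSemidef.1]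
    exact Finset.sum_nonneg fun i _ => hPDK.posSemidef.eigenvalues_nonneg i
  have hdetup : (Z (K+1)).det ≤ (lam + K * H / (d * α ^ 2)) ^ d := by
    calc (Z (K+1)).det ≤ ((Z (K+1)).trace / d) ^ d := psd_det_le_trace_pow hd hPDK.posSemidef
    _ ≤ (lam + K * H / (d * α ^ 2)) ^ d := by
        refine pow_le_pow_left₀ (by positivity) ?_ d
        have := htrace K le_rfl
        rw [div_le_iff₀ hd']
        have heq : (lam + K * H / (d * α ^ 2)) * d = d * lam + K * H / α ^ 2 := by
          field_simp
        rw [heq]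
        exact this
  -- Step F: combine
  set N := ((Finset.Icc 1 K).filter fun k => 16 * (Z k).det < (Z (k + 1)).det).card with hN
  set c : ℝ := K * H / (d * lam * α ^ 2) with hc
  have hc0 : 0 ≤ c := by positivity
  have hsplit : (lam + K * H / (d * α ^ 2)) ^ d = lam ^ d * (1 + c) ^ d := by
    rw [← mul_pow]
    congr 1
    rw [hc]
    field_simp
  have h16 : (16:ℝ) ^ N ≤ (1 + c) ^ d := by
    have h1 := (hlow K).trans (hdetup.trans_eq hsplit)
    have hlp : (0:ℝ) < lam ^ d := by positivity
    have h1' : (16:ℝ) ^ N * lam ^ d ≤ (1 + c) ^ d * lam ^ d := by linarith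
    exact le_of_mul_le_mul_right h1' hlp
  have hlog : (N:ℝ) * Real.log 16 ≤ d * Real.log (1 + c) := by
    have := Real.log_le_log (by positivity) h16
    rwa [Real.log_pow, Real.log_pow] at this
  have hlog16 : (2:ℝ) ≤ Real.log 16 := by
    have h2 : Real.log 16 = 4 * Real.log 2 := by
      rw [show (16:ℝ) = 2 ^ 4 by norm_num, Real.log_pow]
      norm_num
    rw [h2]
    nlinarith [Real.log_two_gt_d9]
  have hlogpos : 0 ≤ Real.log (1 + c) := Real.log_nonneg (by linarith)
  have hNn : (0:ℝ) ≤ N := Nat.cast_nonneg N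
  nlinarith [hlog, hlog16, hNn, hlogpos]
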